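/- arXiv:1804.00563 — 2 statements merged into one kernel-verified Lean document; each statement's English description precedes it below -/
import Mathlib

section
/- Heine's identity: Let w : ℂ → ℂ be a function and Γ a contour such that the moments μ_m = ∫_Γ t^m w(t) dt exist for 0 ≤ m ≤ 2n−2. Then det(μ_{j+k})_{j,k=0}^{n−1} = (1/n!) ∫_{Γ^n} Δ_n(t)^2 Π_{k=1}^n w(t_k) dt_k, where Δ_n(t) = Π_{1≤j<k≤n} (t_k − t_j). -/
open MeasureTheory

lemma vand1 {n : ℕ} (v : Fin n → ℂ) :
    ∑ σ : Equiv.Perm (Fin n), ((Equiv.Perm.sign σ : ℤ) : ℂ) * ∏ j : Fin n, v (σ j) ^ (j : ℕ)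
      = ∏ j : Fin n, ∏ k ∈ Finset.Ioi j, (v k - v j) := by
  rw [← Matrix.det_vandermonde v, Matrix.det_apply']
  simp [Matrix.vandermonde]

lemma vand2 {n : ℕ} (v : Fin n → ℂ) :
    ∑ σ : Equiv.Perm (Fin n), ((Equiv.Perm.sign σ : ℤ) : ℂ) * ∏ j : Fin n, v j ^ ((σ j : ℕ))
      = ∏ j : Fin n, ∏ k ∈ Finset.Ioi j, (v k - v j) := by
  rw [← Matrix.det_vandermonde v, ← Matrix.det_transpose, Matrix.det_apply']
  simp [Matrix.vandermonde]

/-- Heine's identity: the n×n Hankel determinant of the moments of a weight w on ℝ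
equals (1/n!) times the n-fold integral of the squared Vandermonde against the weight. -/
theorem stmt3 (n : ℕ) (w : ℝ → ℂ)
    (hmom : ∀ m : ℕ, m ≤ 2 * n - 2 → Integrable (fun t : ℝ => (t : ℂ) ^ m * w t)) :
    Matrix.det (Matrix.of fun j k : Fin n =>
      ∫ t : ℝ, (t : ℂ) ^ ((j : ℕ) + (k : ℕ)) * w t)
    = (1 / (n.factorial : ℂ)) *
      ∫ t : Fin n → ℝ,
        (∏ j : Fin n, ∏ k ∈ Finset.Ioi j, ((t k : ℂ) - (t j : ℂ))) ^ 2 *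
          ∏ k : Fin n, w (t k) := by
  classical
  set V : (Fin n → ℝ) → ℂ :=
    fun t => ∏ j : Fin n, ∏ k ∈ Finset.Ioi j, ((t k : ℂ) - (t j : ℂ)) with hVdef
  set H : (Fin n → ℝ) → ℂ :=
    fun t => (∏ j : Fin n, ((t j : ℂ) ^ (j : ℕ) * w (t j))) * V t with hHdef
  -- integrability of monomial products
  have hg : ∀ e : Fin n → ℕ, (∀ j, e j ≤ 2 * n - 2) →
      Integrable (fun t : Fin n → ℝ => ∏ j : Fin n, ((t j : ℂ) ^ (e j) * w (t j))) := by
    intro e he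
    exact Integrable.fintype_prod (f := fun j (s : ℝ) => (s : ℂ) ^ (e j) * w s)
      (fun j => hmom _ (he j))
  have hexp : ∀ (σ : Equiv.Perm (Fin n)) (j : Fin n), (σ j : ℕ) + (j : ℕ) ≤ 2 * n - 2 := by
    intro σ j
    have h1 := (σ j).isLt
    have h2 := j.isLt
    omega
  -- H as a finite sum of integrable monomial products
  have hHsum : ∀ t : Fin n → ℝ, H t = ∑ σ : Equiv.Perm (Fin n),
      ((Equiv.Perm.sign σ : ℤ) : ℂ) *
        ∏ j : Fin n, ((t j : ℂ) ^ ((σ j : ℕ) + (j : ℕ)) * w (t j)) := by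
    intro t
    have : ∀ σ : Equiv.Perm (Fin n),
        ∏ j : Fin n, ((t j : ℂ) ^ ((σ j : ℕ) + (j : ℕ)) * w (t j))
          = (∏ j : Fin n, ((t j : ℂ) ^ (j : ℕ) * w (t j))) *
            ∏ j : Fin n, (t j : ℂ) ^ ((σ j : ℕ)) := by
      intro σ
      rw [← Finset.prod_mul_distrib]
      refine Finset.prod_congr rfl fun j _ => ?_
      ring
    simp_rw [this, ← mul_assoc, mul_comm _ (∏ j : Fin n, ((t j : ℂ) ^ (j : ℕ) * w (t j))),
      mul_assoc, ← Finset.mul_sum, vand2 (fun j => (t j : ℂ))]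
    rfl
  have hHint : Integrable H := by
    have : H = fun t => ∑ σ : Equiv.Perm (Fin n),
        ((Equiv.Perm.sign σ : ℤ) : ℂ) *
          ∏ j : Fin n, ((t j : ℂ) ^ ((σ j : ℕ) + (j : ℕ)) * w (t j)) := funext hHsum
    rw [this]
    exact integrable_finset_sum _ fun σ _ =>
      ((hg _ (hexp σ)).const_mul _)
  -- Step 1 : LHS = ∫ H
  have key1 : Matrix.det (Matrix.of fun j k : Fin n =>
      ∫ t : ℝ, (t : ℂ) ^ ((j : ℕ) + (k : ℕ)) * w t) = ∫ t : Fin n → ℝ, H t := by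
    rw [Matrix.det_apply']
    have h1 : ∀ σ : Equiv.Perm (Fin n),
        (∏ j : Fin n, (Matrix.of fun j k : Fin n =>
            ∫ t : ℝ, (t : ℂ) ^ ((j : ℕ) + (k : ℕ)) * w t) (σ j) j)
          = ∫ t : Fin n → ℝ, ∏ j : Fin n, ((t j : ℂ) ^ ((σ j : ℕ) + (j : ℕ)) * w (t j)) := by
      intro σ
      rw [show (volume : Measure (Fin n → ℝ)) = Measure.pi fun _ => volume from rfl,
        integral_fintype_prod_eq_prod (ι := Fin n)
        (f := fun j (s : ℝ) => (s : ℂ) ^ ((σ j : ℕ) + (j : ℕ)) * w s)]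
      rfl
    simp_rw [h1, ← integral_const_mul]
    rw [← integral_finset_sum _ fun σ _ => ((hg _ (hexp σ)).const_mul _)]
    exact integral_congr_ae (Filter.Eventually.of_forall fun t => (hHsum t).symm)
  -- permutation invariance
  have hcomp : ∀ σ : Equiv.Perm (Fin n), ∀ t : Fin n → ℝ,
      (MeasurableEquiv.piCongrLeft (fun _ : Fin n => ℝ) σ.symm) t = fun i => t (σ i) := by
    intro σ t
    funext i
    have h := Equiv.piCongrLeft_apply_apply (fun _ : Fin n => ℝ) σ.symm t (σ i)
    simp only [MeasurableEquiv.coe_piCongrLeft]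
    simp only [Equiv.symm_apply_apply] at h
    exact h
  have hperm : ∀ σ : Equiv.Perm (Fin n),
      ∫ t : Fin n → ℝ, H (fun i => t (σ i)) = ∫ t : Fin n → ℝ, H t := by
    intro σ
    have := (volume_measurePreserving_piCongrLeft (fun _ : Fin n => ℝ) σ.symm).integral_comp' H
    rw [← this]
    refine integral_congr_ae (Filter.Eventually.of_forall fun t => ?_)
    show H (fun i => t (σ i)) = H ((MeasurableEquiv.piCongrLeft (fun _ : Fin n => ℝ) σ.symm) t)
    rw [hcomp σ t]
  have hpermint : ∀ σ : Equiv.Perm (Fin n),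
      Integrable (fun t : Fin n → ℝ => H (fun i => t (σ i))) := by
    intro σ
    have := ((volume_measurePreserving_piCongrLeft (fun _ : Fin n => ℝ) σ.symm).integrable_comp_emb
      (MeasurableEquiv.measurableEmbedding _)).2 hHint
    refine this.congr (Filter.Eventually.of_forall fun t => ?_)
    rw [Function.comp_apply, hcomp σ t]
  -- pointwise symmetrization
  have hsym : ∀ t : Fin n → ℝ,
      ∑ σ : Equiv.Perm (Fin n), H (fun i => t (σ i)) = V t ^ 2 * ∏ k : Fin n, w (t k) := by
    intro t
    have hVt : ∀ σ : Equiv.Perm (Fin n),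
        V (fun i => t (σ i)) = ((Equiv.Perm.sign σ : ℤ) : ℂ) * V t := by
      intro σ
      have h1 : V (fun i => t (σ i))
          = (Matrix.vandermonde fun i => ((t (σ i)) : ℂ)).det :=
        (Matrix.det_vandermonde _).symm
      have h2 : (Matrix.vandermonde fun i => ((t (σ i)) : ℂ))
          = (Matrix.vandermonde fun i => ((t i) : ℂ)).submatrix σ id := by
        ext i j
        simp [Matrix.vandermonde]
      rw [h1, h2, Matrix.det_permute, Matrix.det_vandermonde]
    have hw : ∀ σ : Equiv.Perm (Fin n),
        (∏ j : Fin n, ((t (σ j) : ℂ) ^ (j : ℕ) * w (t (σ j))))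
          = (∏ j : Fin n, w (t j)) * ∏ j : Fin n, (t (σ j) : ℂ) ^ (j : ℕ) := by
      intro σ
      rw [Finset.prod_mul_distrib, mul_comm]
      congr 1
      exact Equiv.prod_comp σ (fun j => w (t j))
    simp_rw [hHdef]
    calc ∑ σ : Equiv.Perm (Fin n),
        (∏ j : Fin n, ((t (σ j) : ℂ) ^ (j : ℕ) * w (t (σ j)))) * V (fun i => t (σ i))
        = ∑ σ : Equiv.Perm (Fin n), ((∏ j : Fin n, w (t j)) * V t) *
            (((Equiv.Perm.sign σ : ℤ) : ℂ) * ∏ j : Fin n, (t (σ j) : ℂ) ^ (j : ℕ)) := by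
          refine Finset.sum_congr rfl fun σ _ => ?_
          rw [hVt σ, hw σ]; ring
      _ = ((∏ j : Fin n, w (t j)) * V t) * ∑ σ : Equiv.Perm (Fin n),
            (((Equiv.Perm.sign σ : ℤ) : ℂ) * ∏ j : Fin n, (t (σ j) : ℂ) ^ (j : ℕ)) := by
          rw [Finset.mul_sum]
      _ = V t ^ 2 * ∏ k : Fin n, w (t k) := by
          rw [vand1 (fun j => (t j : ℂ))]
          rw [hVdef]; ring
  -- Step 2
  have key2 : ∫ t : Fin n → ℝ, V t ^ 2 * ∏ k : Fin n, w (t k)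
      = (n.factorial : ℂ) * ∫ t : Fin n → ℝ, H t := by
    have : (n.factorial : ℂ) * ∫ t : Fin n → ℝ, H t
        = ∑ σ : Equiv.Perm (Fin n), ∫ t : Fin n → ℝ, H (fun i => t (σ i)) := by
      simp_rw [hperm]
      rw [Finset.sum_const, nsmul_eq_mul]
      congr 1
      simp [Fintype.card_perm]
    rw [this, ← integral_finset_sum _ fun σ _ => hpermint σ]
    exact integral_congr_ae (Filter.Eventually.of_forall fun t => (hsym t).symm)
  rw [key1, key2]
  rw [← mul_assoc, one_div, inv_mul_cancel₀ (by exact_mod_cast n.factorial_ne_zero), one_mul]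
end

section
/- For every real C > 0 and natural number d ≥ 1, ∫_{ℝ^d} Δ_d(v)^2 Π_{k=1}^d e^{−C v_k²} dv_k = (2π)^{d/2} / (2C)^{d²/2} · Π_{k=1}^d k!, where Δ_d(v) = Π_{1≤j<k≤d} (v_k − v_j). -/
open Polynomial MeasureTheory Real Filter Set Topology

noncomputable def mG : ℝ → ℝ := fun x => Real.exp (-(1/2 : ℝ) * x ^ 2)

lemma mG_pos (x : ℝ) : 0 < mG x := Real.exp_pos _

lemma integrable_pow_mG (k : ℕ) : Integrable (fun x : ℝ => x ^ k * mG x) := by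
  have h := integrable_rpow_mul_exp_neg_mul_sq (b := (1/2 : ℝ)) (by norm_num) (s := (k : ℝ))
    (by exact lt_of_lt_of_le (by norm_num) (Nat.cast_nonneg k))
  simpa [mG, Real.rpow_natCast] using h

lemma integrable_poly_mG (P : ℝ[X]) : Integrable (fun x : ℝ => P.eval x * mG x) := by
  have : (fun x : ℝ => P.eval x * mG x)
      = fun x : ℝ => ∑ k ∈ Finset.range (P.natDegree + 1), P.coeff k * (x ^ k * mG x) := by
    funext x
    rw [Polynomial.eval_eq_sum_range, Finset.sum_mul]
    simp [mul_assoc]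
  rw [this]
  exact integrable_finset_sum _ fun k _ => (integrable_pow_mG k).const_mul _

lemma tendsto_poly_mG_atTop (P : ℝ[X]) :
    Tendsto (fun x : ℝ => P.eval x * mG x) atTop (𝓝 0) := by
  apply squeeze_zero_norm' (a := fun x : ℝ => |P.eval x / Real.exp x|)
  · filter_upwards [eventually_ge_atTop (2 : ℝ)] with x hx
    have h2 : mG x ≤ Real.exp (-x) := by
      apply Real.exp_le_exp.2
      nlinarith
    have : |P.eval x * mG x| ≤ |P.eval x| * Real.exp (-x) := by
      rw [abs_mul, abs_of_pos (mG_pos x)]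
      exact mul_le_mul_of_nonneg_left h2 (abs_nonneg _)
    calc ‖P.eval x * mG x‖ ≤ |P.eval x| * Real.exp (-x) := this
      _ = |P.eval x / Real.exp x| := by
          rw [Real.exp_neg, abs_div, abs_of_pos (Real.exp_pos x), div_eq_mul_inv]
  · simpa using (P.tendsto_div_exp_atTop).abs

lemma tendsto_poly_mG_atBot (P : ℝ[X]) :
    Tendsto (fun x : ℝ => P.eval x * mG x) atBot (𝓝 0) := by
  have h := tendsto_poly_mG_atTop (P.comp (-X))
  have h2 := h.comp tendsto_neg_atBot_atTop
  convert h2 using 2 with x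
  simp [mG, Function.comp, Polynomial.eval_comp]

/-- Integration by parts for Gaussian: ∫ (P' - x·P)·G = 0 -/
lemma ibp_mG (P : ℝ[X]) :
    ∫ x : ℝ, ((derivative P).eval x - x * P.eval x) * mG x = 0 := by
  set F : ℝ → ℝ := fun x => P.eval x * mG x with hFdef
  have hF : ∀ x : ℝ, HasDerivAt F (((derivative P).eval x - x * P.eval x) * mG x) x := by
    intro x
    have h2 : HasDerivAt (fun x : ℝ => mG x) (-x * mG x) x := by
      have h0 : HasDerivAt (fun x : ℝ => -(1/2 : ℝ) * x ^ 2) (-(1/2 : ℝ) * (2 * x ^ 1)) x :=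
        (hasDerivAt_pow 2 x).const_mul _
      have := h0.exp
      convert this using 1
      · rfl
      simp only [mG]; ring
    have := (P.hasDerivAt x).mul h2
    convert this using 1
    · rfl
    · rfl
    · rfl
    ring
  have hint : Integrable (fun x : ℝ => ((derivative P).eval x - x * P.eval x) * mG x) := by
    have : (fun x : ℝ => ((derivative P).eval x - x * P.eval x) * mG x)
        = fun x : ℝ => (derivative P - X * P).eval x * mG x := by
      funext x; simp only [eval_sub, eval_mul, eval_X]
    rw [this]; exact integrable_poly_mG _
  have htop : Tendsto F atTop (𝓝 0) := tendsto_poly_mG_atTop P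
  have hbot : Tendsto F atBot (𝓝 0) := tendsto_poly_mG_atBot P
  have h1 := integral_Ioi_of_hasDerivAt_of_tendsto' (a := 0)
    (fun x _ => hF x) hint.integrableOn htop
  have h2 := integral_Iic_of_hasDerivAt_of_tendsto' (a := 0)
    (fun x _ => hF x) hint.integrableOn hbot
  rw [← intervalIntegral.integral_Iic_add_Ioi hint.integrableOn hint.integrableOn, h1, h2]
  ring

-- hermite derivative over ℤ
lemma hermite_deriv_pair (n : ℕ) :
    derivative (hermite n) = (n : ℤ[X]) * hermite (n - 1) ∧
    derivative (hermite (n + 1)) = ((n : ℤ[X]) + 1) * hermite n := by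
  induction n with
  | zero =>
    constructor
    · simp
    · simp [hermite_one]
  | succ n ih =>
    refine ⟨by simpa [Nat.cast_add] using ih.2, ?_⟩
    have key : (hermite (n + 1) : ℤ[X]) = X * hermite n - (n : ℤ[X]) * hermite (n - 1) := by
      rw [hermite_succ, ih.1]
    rw [hermite_succ (n + 1), derivative_sub, derivative_mul, derivative_X, one_mul, ih.2,
      derivative_mul, ih.1]
    have : derivative ((n : ℤ[X]) + 1) = 0 := by
      simp
    rw [this]
    push_cast
    linear_combination (-(n : ℤ[X]) - 1) * key

lemma derivative_hermite_int (n : ℕ) :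
    derivative (hermite n) = (n : ℤ[X]) * hermite (n - 1) := (hermite_deriv_pair n).1

-- real hermite polynomials
noncomputable def mH (n : ℕ) : ℝ[X] := (hermite n).map (Int.castRingHom ℝ)

lemma mH_monic (n : ℕ) : (mH n).Monic := (hermite_monic n).map _

lemma mH_natDegree (n : ℕ) : (mH n).natDegree = n := by
  rw [mH, (hermite_monic n).natDegree_map, natDegree_hermite]

lemma mH_zero : mH 0 = 1 := by simp [mH]

lemma mH_succ (n : ℕ) : mH (n + 1) = X * mH n - derivative (mH n) := by
  simp only [mH, hermite_succ, Polynomial.map_sub, Polynomial.map_mul, Polynomial.map_X,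
    derivative_map]

lemma mH_deriv (n : ℕ) : derivative (mH n) = C (n : ℝ) * mH (n - 1) := by
  rw [mH, derivative_map, derivative_hermite_int, Polynomial.map_mul]
  congr 1
  simp

noncomputable def IP (Q : ℝ[X]) : ℝ := ∫ x : ℝ, Q.eval x * mG x

lemma IP_sub (A B : ℝ[X]) : IP (A - B) = IP A - IP B := by
  unfold IP
  rw [← integral_sub (integrable_poly_mG A) (integrable_poly_mG B)]
  congr 1; funext x; simp [sub_mul]

lemma IP_C_mul (c : ℝ) (Q : ℝ[X]) : IP (C c * Q) = c * IP Q := by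
  unfold IP
  rw [← integral_const_mul]
  congr 1; funext x; simp [mul_assoc]

lemma IP_ibp (P : ℝ[X]) : IP (derivative P - X * P) = 0 := by
  unfold IP
  rw [← ibp_mG P]
  congr 1; funext x; simp

lemma IP_key (Pm Pn : ℝ[X]) :
    IP ((X * Pm - derivative Pm) * Pn) = IP (Pm * derivative Pn) := by
  have e : (X * Pm - derivative Pm) * Pn - Pm * derivative Pn
      = -(derivative (Pm * Pn) - X * (Pm * Pn)) := by
    rw [derivative_mul]; ring
  have h : IP ((X * Pm - derivative Pm) * Pn) - IP (Pm * derivative Pn) = 0 := by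
    rw [← IP_sub, e, show -(derivative (Pm * Pn) - X * (Pm * Pn))
      = 0 - (derivative (Pm * Pn) - X * (Pm * Pn)) by ring, IP_sub, IP_ibp]
    simp [IP]
  linarith

lemma IP_one : IP 1 = Real.sqrt (2 * π) := by
  unfold IP
  simp only [eval_one, one_mul, mG]
  have h := integral_gaussian (1/2 : ℝ)
  rw [h]
  norm_num [mul_comm]

lemma mJ (m n : ℕ) : IP (mH m * mH n)
    = if m = n then (n.factorial : ℝ) * Real.sqrt (2 * π) else 0 := by
  induction m generalizing n with
  | zero =>
    cases n with
    | zero => simp [mH_zero, IP_one]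
    | succ k =>
      rw [mH_zero, one_mul, mH_succ, show (X * mH k - derivative (mH k))
        = (X * mH k - derivative (mH k)) * 1 by ring, IP_key]
      simp only [derivative_one, mul_zero]
      rw [show (0 : ℝ[X]) = C 0 * 0 by simp, IP_C_mul]
      simp
  | succ m ih =>
    rw [mH_succ, IP_key, mH_deriv, show mH m * (C (n : ℝ) * mH (n - 1))
      = C (n : ℝ) * (mH m * mH (n - 1)) by ring, IP_C_mul, ih]
    cases n with
    | zero => simp
    | succ k =>
      simp only [Nat.cast_add, Nat.cast_one, Nat.add_sub_cancel, Nat.add_right_cancel_iff,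
        Nat.succ_eq_add_one]
      by_cases h : m = k
      · subst h
        simp only [if_pos rfl, Nat.factorial_succ]
        push_cast
        ring
      · simp [h]

noncomputable def pF (a b : ℕ) (x : ℝ) : ℝ := (mH a).eval x * (mH b).eval x * mG x

lemma integrable_pF (a b : ℕ) : Integrable (pF a b) := by
  have := integrable_poly_mG (mH a * mH b)
  simp only [eval_mul] at this; exact this

lemma integral_pF (a b : ℕ) :
    ∫ x : ℝ, pF a b x = if a = b then (b.factorial : ℝ) * Real.sqrt (2 * π) else 0 := by
  rw [← mJ a b]
  unfold IP pF
  congr 1; funext x; simp [eval_mul]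

theorem core (d : ℕ) :
    (∫ v : Fin d → ℝ,
      (∏ j : Fin d, ∏ k ∈ Finset.Ioi j, (v k - v j)) ^ 2 * ∏ k : Fin d, mG (v k))
    = (d.factorial : ℝ) * (∏ i : Fin d, ((i : ℕ).factorial : ℝ)) * Real.sqrt (2 * π) ^ d := by
  classical
  set sg : Equiv.Perm (Fin d) → ℝ := fun σ => ((Equiv.Perm.sign σ : ℤ) : ℝ) with hsg
  have hdet : ∀ v : Fin d → ℝ, (∏ j : Fin d, ∏ k ∈ Finset.Ioi j, (v k - v j))
      = ∑ σ : Equiv.Perm (Fin d), sg σ * ∏ i : Fin d, (mH (σ i)).eval (v i) := by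
    intro v
    rw [← Matrix.det_vandermonde v,
      Matrix.det_eval_matrixOfPolynomials_eq_det_vandermonde v (fun i => mH i)
        (fun i => mH_natDegree i) (fun i => mH_monic i),
      ← Matrix.det_transpose, Matrix.det_apply]
    apply Finset.sum_congr rfl
    intro σ _
    simp [Units.smul_def, zsmul_eq_mul, Matrix.transpose_apply, hsg]
  have hexp : ∀ v : Fin d → ℝ,
      (∏ j : Fin d, ∏ k ∈ Finset.Ioi j, (v k - v j)) ^ 2 * ∏ k : Fin d, mG (v k)
      = ∑ σ : Equiv.Perm (Fin d), ∑ τ : Equiv.Perm (Fin d),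
          (sg σ * sg τ) * ∏ i : Fin d, pF (σ i) (τ i) (v i) := by
    intro v
    rw [hdet v, sq, Finset.sum_mul_sum, Finset.sum_mul]
    apply Finset.sum_congr rfl; intro σ _
    rw [Finset.sum_mul]
    apply Finset.sum_congr rfl; intro τ _
    have : (∏ i : Fin d, pF (σ i) (τ i) (v i))
        = (∏ i : Fin d, (mH (σ i)).eval (v i)) * (∏ i : Fin d, (mH (τ i)).eval (v i))
          * ∏ i : Fin d, mG (v i) := by
      rw [← Finset.prod_mul_distrib, ← Finset.prod_mul_distrib]
      exact Finset.prod_congr rfl fun i _ => rfl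
    rw [this]; ring
  simp only [hexp]
  rw [integral_finset_sum _ (fun σ _ => integrable_finset_sum _ (fun τ _ =>
    (Integrable.fintype_prod (f := fun i => pF (σ i) (τ i)) (fun i => integrable_pF _ _)).const_mul _))]
  have hterm : ∀ σ τ : Equiv.Perm (Fin d),
      (∫ v : Fin d → ℝ, (sg σ * sg τ) * ∏ i : Fin d, pF (σ i) (τ i) (v i))
      = (sg σ * sg τ) * ∏ i : Fin d,
          (if σ i = τ i then (((τ i : ℕ)).factorial : ℝ) * Real.sqrt (2 * π) else 0) := by
    intro σ τ
    rw [integral_const_mul, integral_fintype_prod_volume_eq_prod (fun i => pF (σ i) (τ i))]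
    congr 1
    apply Finset.prod_congr rfl
    intro i _
    rw [integral_pF]
    simp [Fin.val_eq_val]
  calc (∑ σ : Equiv.Perm (Fin d), ∫ v : Fin d → ℝ, ∑ τ : Equiv.Perm (Fin d),
        (sg σ * sg τ) * ∏ i : Fin d, pF (σ i) (τ i) (v i))
      = ∑ σ : Equiv.Perm (Fin d), ∑ τ : Equiv.Perm (Fin d),
        (sg σ * sg τ) * ∏ i : Fin d,
          (if σ i = τ i then (((τ i : ℕ)).factorial : ℝ) * Real.sqrt (2 * π) else 0) := by
        apply Finset.sum_congr rfl; intro σ _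
        rw [integral_finset_sum _ (fun τ _ =>
          (Integrable.fintype_prod (f := fun i => pF (σ i) (τ i))
            (fun i => integrable_pF _ _)).const_mul _)]
        exact Finset.sum_congr rfl fun τ _ => hterm σ τ
    _ = ∑ σ : Equiv.Perm (Fin d),
          ((∏ i : Fin d, ((i : ℕ).factorial : ℝ)) * Real.sqrt (2 * π) ^ d) := by
        apply Finset.sum_congr rfl; intro σ _
        rw [Finset.sum_eq_single σ]
        · have h1 : ∀ i : Fin d, (if σ i = σ i then (((σ i : ℕ)).factorial : ℝ)
              * Real.sqrt (2 * π) else 0) = (((σ i : ℕ)).factorial : ℝ) * Real.sqrt (2 * π) := by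
            intro i; rw [if_pos rfl]
          rw [Finset.prod_congr rfl (fun i _ => h1 i), Finset.prod_mul_distrib,
            Finset.prod_const]
          have h2 : sg σ * sg σ = 1 := by
            have : (Equiv.Perm.sign σ : ℤ) * (Equiv.Perm.sign σ : ℤ) = 1 := by
              rcases Int.units_eq_one_or (Equiv.Perm.sign σ) with h | h <;> rw [h] <;> norm_num
            rw [hsg]
            rw [← Int.cast_mul, this, Int.cast_one]
          rw [h2, one_mul, Equiv.prod_comp σ (fun i : Fin d => ((i : ℕ).factorial : ℝ)),
            Finset.card_univ, Fintype.card_fin]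
        · intro τ _ hτ
          obtain ⟨i, hi⟩ : ∃ i, σ i ≠ τ i := by
            by_contra h
            push_neg at h
            exact hτ (Equiv.ext fun i => (h i)).symm
          have hz : (∏ i : Fin d, if σ i = τ i then (((τ i : ℕ)).factorial : ℝ)
              * Real.sqrt (2 * π) else 0) = 0 :=
            Finset.prod_eq_zero (Finset.mem_univ i) (if_neg hi)
          rw [hz, mul_zero]
        · intro h; exact absurd (Finset.mem_univ σ) h
    _ = (d.factorial : ℝ) * (∏ i : Fin d, ((i : ℕ).factorial : ℝ)) * Real.sqrt (2 * π) ^ d := by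
        rw [Finset.sum_const, Finset.card_univ, Fintype.card_perm, Fintype.card_fin,
          nsmul_eq_mul, mul_assoc]

lemma prod_fact (d : ℕ) :
    (d.factorial : ℝ) * ∏ i : Fin d, ((i : ℕ).factorial : ℝ)
      = ∏ k ∈ Finset.Icc 1 d, (k.factorial : ℝ) := by
  induction d with
  | zero => simp
  | succ d ih =>
    rw [Fin.prod_univ_castSucc, Finset.prod_Icc_succ_top (Nat.le_add_left 1 d), ← ih]
    simp only [Fin.coe_castSucc, Fin.val_last]
    ring

lemma sum_card_Ioi (d : ℕ) : 2 * (∑ j : Fin d, (Finset.Ioi j).card) = d * d - d := by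
  have h1 : (∑ j : Fin d, (Finset.Ioi j).card) = ∑ j ∈ Finset.range d, (d - 1 - j) := by
    rw [← Fin.sum_univ_eq_sum_range]
    exact Finset.sum_congr rfl fun j _ => Fin.card_Ioi j
  have h2 : (∑ j ∈ Finset.range d, (d - 1 - j)) = ∑ j ∈ Finset.range d, j := by
    exact Finset.sum_range_reflect (fun j => j) d
  rw [h1, h2, mul_comm, Finset.sum_range_id_mul_two]
  cases d with
  | zero => rfl
  | succ n => simp [Nat.succ_sub_one]; ring_nf; omega

/-- Gaussian Selberg (Mehta) integral: for C > 0 and d ≥ 1,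
∫_{ℝ^d} Δ_d(v)² Π e^{−C v_k²} dv = (2π)^{d/2} (2C)^{−d²/2} Π_{k=1}^d k!. -/
theorem stmt4 (C : ℝ) (hC : 0 < C) (d : ℕ) (hd : 1 ≤ d) :
    (∫ v : Fin d → ℝ,
      (∏ j : Fin d, ∏ k ∈ Finset.Ioi j, (v k - v j)) ^ 2 *
        ∏ k : Fin d, Real.exp (-C * (v k) ^ 2))
    = (2 * Real.pi) ^ ((d : ℝ) / 2) / (2 * C) ^ (((d : ℝ) ^ 2) / 2) *
      ∏ k ∈ Finset.Icc 1 d, (k.factorial : ℝ) := by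
  have hc2 : (0:ℝ) < 2 * C := by linarith
  set c : ℝ := (2 * C) ^ (-(1/2 : ℝ)) with hcdef
  have hcpos : 0 < c := Real.rpow_pos_of_pos hc2 _
  have hcsq : c ^ 2 = (2 * C)⁻¹ := by
    rw [hcdef, ← Real.rpow_natCast ((2*C) ^ (-(1/2:ℝ))) 2, ← Real.rpow_mul hc2.le]
    norm_num [Real.rpow_neg_one]
  set f : (Fin d → ℝ) → ℝ := fun v =>
    (∏ j : Fin d, ∏ k ∈ Finset.Ioi j, (v k - v j)) ^ 2 *
        ∏ k : Fin d, Real.exp (-C * (v k) ^ 2) with hfdef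
  set E : ℕ := ∑ j : Fin d, (Finset.Ioi j).card with hEdef
  have hfs : ∀ u : Fin d → ℝ, f (c • u) = c ^ (2 * E) *
      ((∏ j : Fin d, ∏ k ∈ Finset.Ioi j, (u k - u j)) ^ 2 * ∏ k : Fin d, mG (u k)) := by
    intro u
    have hv : ∀ k : Fin d, (c • u) k = c * u k := fun k => rfl
    have hΔ : (∏ j : Fin d, ∏ k ∈ Finset.Ioi j, ((c • u) k - (c • u) j))
        = c ^ E * ∏ j : Fin d, ∏ k ∈ Finset.Ioi j, (u k - u j) := by
      simp_rw [hv]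
      rw [hEdef, ← Finset.prod_pow_eq_pow_sum, ← Finset.prod_mul_distrib]
      apply Finset.prod_congr rfl; intro j _
      rw [← Finset.prod_const, ← Finset.prod_mul_distrib]
      apply Finset.prod_congr rfl; intro k _
      ring
    have hG : ∀ k : Fin d, Real.exp (-C * ((c • u) k) ^ 2) = mG (u k) := by
      intro k
      rw [hv, mG]
      congr 1
      rw [mul_pow, hcsq]
      field_simp
    rw [hfdef]
    simp only [hΔ, hG]
    rw [mul_pow, ← pow_mul]
    ring
  have hrank : Module.finrank ℝ (Fin d → ℝ) = d := by
    rw [Module.finrank_fintype_fun_eq_card, Fintype.card_fin]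
  have hsc := MeasureTheory.Measure.integral_comp_smul (μ := (volume : Measure (Fin d → ℝ))) f c
  rw [hrank] at hsc
  have habs : |((c ^ d)⁻¹ : ℝ)| = (c ^ d)⁻¹ := abs_of_pos (by positivity)
  rw [habs, smul_eq_mul] at hsc
  have hL : (∫ x : Fin d → ℝ, f (c • x)) = c ^ (2 * E) *
      ((d.factorial : ℝ) * (∏ i : Fin d, ((i : ℕ).factorial : ℝ)) * Real.sqrt (2 * π) ^ d) := by
    simp_rw [hfs]
    rw [integral_const_mul, core d]
  have hint : (∫ v : Fin d → ℝ, f v) = c ^ d * c ^ (2 * E) *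
      ((d.factorial : ℝ) * (∏ i : Fin d, ((i : ℕ).factorial : ℝ)) * Real.sqrt (2 * π) ^ d) := by
    rw [hL] at hsc
    field_simp at hsc ⊢
    linarith [hsc]
  have hdE : d + 2 * E = d * d := by
    have := sum_card_Ioi d
    rw [← hEdef] at this
    have hdd : d ≤ d * d := Nat.le_mul_of_pos_left d hd
    omega
  have hcpow : c ^ d * c ^ (2 * E) = ((2 * C) ^ (((d : ℝ) ^ 2) / 2))⁻¹ := by
    rw [← pow_add, hdE, hcdef, ← Real.rpow_natCast ((2*C) ^ (-(1/2:ℝ))) (d*d),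
      ← Real.rpow_mul hc2.le, ← Real.rpow_neg hc2.le]
    congr 1
    push_cast
    ring
  have hsqrt : Real.sqrt (2 * π) ^ d = (2 * Real.pi) ^ ((d : ℝ) / 2) := by
    rw [Real.sqrt_eq_rpow, ← Real.rpow_natCast ((2*π) ^ ((1:ℝ)/2)) d,
      ← Real.rpow_mul (by positivity)]
    congr 1
    ring
  rw [show (∫ v : Fin d → ℝ,
      (∏ j : Fin d, ∏ k ∈ Finset.Ioi j, (v k - v j)) ^ 2 *
        ∏ k : Fin d, Real.exp (-C * (v k) ^ 2)) = ∫ v : Fin d → ℝ, f v from rfl,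
    hint, hcpow, hsqrt, ← prod_fact d]
  ring
end
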